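/- Let κ > 0, a ∈ ℝ, let (u, λ) solve the ergodic equation E(κ, a) with density m, and let (v, λ′) solve the linearized equation L(κ, a) along (u, λ). Then ∫_{−π}^{π} [ (v'(y))² m(y) + (λ′ + κ V(y)) v(y) m(y) ] dy = 0; equivalently, ∫_{−π}^{π} (v'(y))² m(y) dy = −∫_{−π}^{π} (λ′ + κ V(y)) v(y) m(y) dy. -/

import Mathlib

open Real

/-- `V x = 1 - cos x`. -/
noncomputable def Vfun (x : ℝ) : ℝ := 1 - Real.cos x

/-- The pair `(u, lam)` solves the ergodic equation `E(κ, a)`: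
`u` is `C²` and even, `u 0 = 0`, `u'(±π) = 0`, and
`-u'' + (1/2)|u'|² + lam = κ V(x)(1 - a)` on `[-π, π]`. -/
def SolvesE (κ a : ℝ) (u : ℝ → ℝ) (lam : ℝ) : Prop :=
  ContDiff ℝ 2 u ∧ (∀ x : ℝ, u (-x) = u x) ∧ u 0 = 0 ∧
  deriv u π = 0 ∧ deriv u (-π) = 0 ∧
  ∀ x ∈ Set.Icc (-π) π,
    -(deriv (deriv u) x) + (1 / 2) * (deriv u x) ^ 2 + lam = κ * Vfun x * (1 - a)

/-- The density associated to `u`. -/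
noncomputable def dens (u : ℝ → ℝ) (x : ℝ) : ℝ :=
  Real.exp (-u x) / ∫ y in (-π)..π, Real.exp (-u y)

/-- The pair `(v, lam')` solves the linearized equation `L(κ, a)` along `(u, lam)`:
`v` is `C²`, `v 0 = 0`, `v'(±π) = 0`, and `-v'' + u' v' + lam' = -κ V(x)` on `[-π, π]`. -/
def SolvesL (κ : ℝ) (u v : ℝ → ℝ) (lam' : ℝ) : Prop :=
  ContDiff ℝ 2 v ∧ v 0 = 0 ∧ deriv v π = 0 ∧ deriv v (-π) = 0 ∧
  ∀ x ∈ Set.Icc (-π) π,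
    -(deriv (deriv v) x) + deriv u x * deriv v x + lam' = -(κ * Vfun x)

/-- The integral identity `∫ [(v')² m + (lam' + κ V) v m] = 0`, equivalently
`∫ (v')² m = -∫ (lam' + κ V) v m`. -/
theorem linearized_integral_identity (κ a : ℝ) (hκ : 0 < κ) (u v : ℝ → ℝ) (lam lam' : ℝ)
    (hu : SolvesE κ a u lam) (hv : SolvesL κ u v lam') :
    (∫ y in (-π)..π,
        ((deriv v y) ^ 2 * dens u y + (lam' + κ * Vfun y) * v y * dens u y)) = 0 ∧
    (∫ y in (-π)..π, (deriv v y) ^ 2 * dens u y) =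
      -∫ y in (-π)..π, (lam' + κ * Vfun y) * v y * dens u y := by
  obtain ⟨hu2, -, -, -, -, -⟩ := hu
  obtain ⟨hv2, -, hvπ, hvmπ, heq⟩ := hv
  have hud : Differentiable ℝ u := hu2.differentiable (by norm_num)
  have hvd : Differentiable ℝ v := hv2.differentiable (by norm_num)
  have hu1 : ContDiff ℝ 1 (deriv u) := by
    have := (contDiff_succ_iff_deriv (n := 1)).mp (by exact_mod_cast hu2)
    exact this.2.2
  have hv1 : ContDiff ℝ 1 (deriv v) := by
    have := (contDiff_succ_iff_deriv (n := 1)).mp (by exact_mod_cast hv2)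
    exact this.2.2
  have hvd' : Differentiable ℝ (deriv v) := hv1.differentiable one_ne_zero
  -- the unnormalized integrand
  set g : ℝ → ℝ := fun y =>
    (deriv v y) ^ 2 * Real.exp (-u y) + (lam' + κ * Vfun y) * v y * Real.exp (-u y) with hg
  set F : ℝ → ℝ := fun y => v y * deriv v y * Real.exp (-u y) with hF
  have hderiv : ∀ x ∈ Set.uIcc (-π) π, HasDerivAt F (g x) x := by
    intro x hx
    rw [Set.uIcc_of_le (by linarith [Real.pi_pos])] at hx
    have h1 : HasDerivAt v (deriv v x) x := (hvd x).hasDerivAt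
    have h2 : HasDerivAt (deriv v) (deriv (deriv v) x) x := (hvd' x).hasDerivAt
    have h3 : HasDerivAt (fun y => Real.exp (-u y)) (-(deriv u x) * Real.exp (-u x)) x := by
      have : HasDerivAt (fun y => -u y) (-(deriv u x)) x := ((hud x).hasDerivAt).neg
      simpa [mul_comm] using this.exp
    have h4 := ((h1.mul h2).mul h3)
    have hx2 := heq x hx
    have hval : (deriv v x * deriv v x + v x * deriv (deriv v) x) * Real.exp (-u x)
        + v x * deriv v x * (-(deriv u x) * Real.exp (-u x)) = g x := by
      have : lam' + κ * Vfun x = deriv (deriv v) x - deriv u x * deriv v x := by linarith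
      simp only [hg, this]
      ring
    rw [← hval]
    exact h4
  have hgc : Continuous g := by
    have hdv : Continuous (deriv v) := hv1.continuous
    simp only [hg, Vfun]
    fun_prop
  have hint : ∫ y in (-π)..π, g y = 0 := by
    rw [intervalIntegral.integral_eq_sub_of_hasDerivAt hderiv (hgc.intervalIntegrable _ _)]
    simp [hF, hvπ, hvmπ]
  set Z : ℝ := ∫ y in (-π)..π, Real.exp (-u y) with hZ
  have key : (∫ y in (-π)..π,
      ((deriv v y) ^ 2 * dens u y + (lam' + κ * Vfun y) * v y * dens u y)) = 0 := by
    have : ∀ y : ℝ, (deriv v y) ^ 2 * dens u y + (lam' + κ * Vfun y) * v y * dens u y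
        = (1 / Z) * g y := by
      intro y
      simp only [dens, hg, ← hZ]
      ring
    rw [intervalIntegral.integral_congr (fun y _ => this y),
      intervalIntegral.integral_const_mul, hint, mul_zero]
  refine ⟨key, ?_⟩
  have hc1 : Continuous (fun y => (deriv v y) ^ 2 * dens u y) := by
    have : Continuous (deriv v) := hv1.continuous
    unfold dens; fun_prop
  have hc2 : Continuous (fun y => (lam' + κ * Vfun y) * v y * dens u y) := by
    unfold dens Vfun; fun_prop
  rw [intervalIntegral.integral_add (hc1.intervalIntegrable _ _) (hc2.intervalIntegrable _ _)] at key
  linarith
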